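/- Let G = (V, E) be a finite simple undirected graph with non-negative edge weights w : E → ℕ that admits a minimum-weight perfect matching M, let r ≥ w(M) be an integer, and define new edge weights w' : E → ℤ by w'(e) = −w(e) − r − 1 for e ∈ M and w'(e) = w(e) + r + 1 for e ∉ M. Then every cycle C in G with w'(C) ≤ r − w(M) is M-alternating. -/

import Mathlib

variable {V : Type} [Fintype V] [DecidableEq V]

/-- A perfect matching of a graph `G`, viewed as a finite set of edges:
every edge belongs to `G` and every vertex lies in exactly one edge of `M`. -/
def IsPM (G : SimpleGraph V) (M : Finset (Sym2 V)) : Prop :=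
  (∀ e ∈ M, e ∈ G.edgeSet) ∧ ∀ v : V, ∃! e, e ∈ M ∧ v ∈ e

/-- The total weight of a set of edges. -/
def wt (w : Sym2 V → ℤ) (X : Finset (Sym2 V)) : ℤ := ∑ e ∈ X, w e

/-- The total weight of (the edge set of) a closed walk. -/
def cycWt {G : SimpleGraph V} (w : Sym2 V → ℤ) {v : V} (c : G.Walk v v) : ℤ :=
  (c.edges.map w).sum

/-- A cycle `c` is `M`-alternating: its edges alternate (cyclically) between edges in `M`
and edges not in `M`; equivalently, every vertex of the cycle lies in exactly one edge of
the cycle that belongs to `M`. -/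
def IsAltCycle (G : SimpleGraph V) (M : Finset (Sym2 V)) {v : V} (c : G.Walk v v) : Prop :=
  c.IsCycle ∧ ∀ u ∈ c.support, ∃! e, e ∈ c.edges ∧ u ∈ e ∧ e ∈ M

/-- **Lemma (light cycles are alternating).** Let `M` be a minimum-weight perfect matching
of `G` with non-negative weights `w : E → ℕ`, let `r ≥ w(M)` be an integer, and define
`w'(e) = -w(e) - r - 1` for `e ∈ M` and `w'(e) = w(e) + r + 1` for `e ∉ M`. Then every
cycle `C` of `G` with `w'(C) ≤ r - w(M)` is `M`-alternating. -/
theorem light_cycles_are_alternating (G : SimpleGraph V) (w : Sym2 V → ℕ)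
    (M : Finset (Sym2 V)) (hM : IsPM G M)
    (hmin : ∀ M' : Finset (Sym2 V), IsPM G M' →
      wt (fun e => (w e : ℤ)) M ≤ wt (fun e => (w e : ℤ)) M')
    (r : ℤ) (hr : wt (fun e => (w e : ℤ)) M ≤ r)
    (w' : Sym2 V → ℤ)
    (hw' : ∀ e : Sym2 V,
      w' e = if e ∈ M then -(w e : ℤ) - r - 1 else (w e : ℤ) + r + 1)
    {v : V} (c : G.Walk v v) (hc : c.IsCycle)
    (hlight : cycWt w' c ≤ r - wt (fun e => (w e : ℤ)) M) :
    IsAltCycle G M c := by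
  classical
  obtain ⟨hME, hMcov⟩ := hM
  set S : Finset (Sym2 V) := c.edges.toFinset with hSdef
  set T : Finset V := c.support.toFinset with hTdef
  have hnodupE : c.edges.Nodup := hc.edges_nodup
  have hScard : S.card = c.length := by
    rw [hSdef, List.toFinset_card_of_nodup hnodupE, SimpleGraph.Walk.length_edges]
  -- v is in the tail of the support
  have hvtail : v ∈ c.support.tail := by
    cases c with
    | nil => simpa using hc.three_le_length
    | cons h p => simpa using p.end_mem_support
  have hTtail : T = c.support.tail.toFinset := by
    rw [hTdef]
    conv_lhs => rw [SimpleGraph.Walk.support_eq_cons]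
    rw [List.toFinset_cons, Finset.insert_eq_self]
    simpa using hvtail
  have hTcard : T.card = c.length := by
    rw [hTtail, List.toFinset_card_of_nodup hc.support_nodup]
    have h1 := c.length_support
    have h2 : c.support.tail.length = c.support.length - 1 := c.support.length_tail
    omega
  set k := (S ∩ M).card with hk
  set m := (S \ M).card with hm
  have hkm : k + m = c.length := by
    rw [hk, hm, Finset.card_inter_add_card_sdiff, hScard]
  -- each vertex of T lies in at most one edge of S ∩ M
  have hcnt_le : ∀ u : V, ((S ∩ M).filter (fun e => u ∈ e)).card ≤ 1 := by
    intro u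
    rw [Finset.card_le_one]
    intro e₁ h₁ e₂ h₂
    simp only [Finset.mem_filter, Finset.mem_inter] at h₁ h₂
    exact (hMcov u).unique ⟨h₁.1.2, h₁.2⟩ ⟨h₂.1.2, h₂.2⟩
  -- double counting
  have hdouble : ∑ u ∈ T, ((S ∩ M).filter (fun e => u ∈ e)).card = 2 * k := by
    have hswap : ∑ u ∈ T, ((S ∩ M).filter (fun e => u ∈ e)).card
        = ∑ e ∈ S ∩ M, (T.filter (fun u => u ∈ e)).card := by
      simp only [Finset.card_filter]
      rw [Finset.sum_comm]
    rw [hswap]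
    rw [Finset.sum_congr rfl (fun e he => ?_), Finset.sum_const, smul_eq_mul, mul_comm]
    -- T.filter (· ∈ e) has cardinality 2
    have heS : e ∈ c.edges := by
      rw [Finset.mem_inter] at he; simpa [hSdef] using he.1
    induction e with
    | h a b =>
      have hab : a ≠ b := by
        have := c.edges_subset_edgeSet heS
        intro h; subst h; exact G.loopless.irrefl a this
      have haT : a ∈ T := by
        simpa [hTdef] using c.fst_mem_support_of_mem_edges heS
      have hbT : b ∈ T := by
        simpa [hTdef] using c.snd_mem_support_of_mem_edges heS
      have : T.filter (fun u => u ∈ s(a, b)) = {a, b} := by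
        ext u
        simp only [Finset.mem_filter, Sym2.mem_iff, Finset.mem_insert, Finset.mem_singleton]
        constructor
        · rintro ⟨-, h⟩; exact h
        · rintro (rfl | rfl) <;> simp [haT, hbT]
      rw [this, Finset.card_insert_of_notMem (by simpa using hab), Finset.card_singleton]
  have h2k_le : 2 * k ≤ c.length := by
    rw [← hdouble, ← hTcard]
    calc ∑ u ∈ T, ((S ∩ M).filter (fun e => u ∈ e)).card
        ≤ ∑ _u ∈ T, 1 := Finset.sum_le_sum (fun u _ => hcnt_le u)
      _ = T.card := by simp
  -- weight computation
  have hsumS : cycWt w' c = ∑ e ∈ S, w' e := by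
    rw [cycWt, hSdef, List.sum_toFinset _ hnodupE]
  have hsplit : ∑ e ∈ S, w' e = ∑ e ∈ S ∩ M, w' e + ∑ e ∈ S \ M, w' e :=
    (Finset.sum_inter_add_sum_sdiff S M w').symm
  have hsum1 : ∑ e ∈ S ∩ M, w' e = -(∑ e ∈ S ∩ M, (w e : ℤ)) - (k : ℤ) * (r + 1) := by
    have heq : ∀ e ∈ S ∩ M, w' e = -(w e : ℤ) - (r + 1) := fun e he => by
      rw [hw' e, if_pos (Finset.mem_inter.mp he).2]; ring
    rw [Finset.sum_congr rfl heq, Finset.sum_sub_distrib, Finset.sum_neg_distrib,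
      Finset.sum_const, hk, nsmul_eq_mul]
  have hsum2 : (m : ℤ) * (r + 1) ≤ ∑ e ∈ S \ M, w' e := by
    calc (m : ℤ) * (r + 1) = ∑ _e ∈ S \ M, (r + 1) := by
          rw [Finset.sum_const, hm, nsmul_eq_mul]
      _ ≤ ∑ e ∈ S \ M, w' e := by
          apply Finset.sum_le_sum
          intro e he
          rw [hw' e, if_neg (Finset.mem_sdiff.mp he).2]
          have : (0 : ℤ) ≤ (w e : ℤ) := Int.natCast_nonneg _
          linarith
  have hwM : ∑ e ∈ S ∩ M, (w e : ℤ) ≤ wt (fun e => (w e : ℤ)) M := by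
    rw [wt]
    exact Finset.sum_le_sum_of_subset_of_nonneg (Finset.inter_subset_right)
      (fun e _ _ => Int.natCast_nonneg _)
  have hwM0 : (0 : ℤ) ≤ wt (fun e => (w e : ℤ)) M := by
    rw [wt]; exact Finset.sum_nonneg (fun e _ => Int.natCast_nonneg _)
  -- conclude m ≤ k
  have hmk : m ≤ k := by
    by_contra hlt
    push_neg at hlt
    have h1 : (k : ℤ) + 1 ≤ (m : ℤ) := by exact_mod_cast hlt
    have hr0 : (0 : ℤ) ≤ r := le_trans hwM0 hr
    have : -(wt (fun e => (w e : ℤ)) M) - (k : ℤ) * (r + 1) + (m : ℤ) * (r + 1)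
        ≤ r - wt (fun e => (w e : ℤ)) M := by
      calc -(wt (fun e => (w e : ℤ)) M) - (k : ℤ) * (r + 1) + (m : ℤ) * (r + 1)
          ≤ -(∑ e ∈ S ∩ M, (w e : ℤ)) - (k : ℤ) * (r + 1) + ∑ e ∈ S \ M, w' e := by
            have := hwM; linarith [hsum2]
        _ = cycWt w' c := by rw [hsumS, hsplit, hsum1]
        _ ≤ r - wt (fun e => (w e : ℤ)) M := hlight
    nlinarith
  have hkm2 : c.length = 2 * k := by omega
  -- every cnt is exactly 1
  have hcnt_eq : ∀ u ∈ T, ((S ∩ M).filter (fun e => u ∈ e)).card = 1 := by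
    have hsum_eq : ∑ u ∈ T, ((S ∩ M).filter (fun e => u ∈ e)).card = ∑ _u ∈ T, 1 := by
      rw [hdouble]
      simp [hTcard, hkm2]
    intro u hu
    exact (Finset.sum_eq_sum_iff_of_le (fun u _ => hcnt_le u)).mp hsum_eq u hu
  refine ⟨hc, fun u hu => ?_⟩
  have huT : u ∈ T := by simpa [hTdef] using hu
  obtain ⟨e, he⟩ := Finset.card_eq_one.mp (hcnt_eq u huT)
  have heMem : e ∈ (S ∩ M).filter (fun e => u ∈ e) := by rw [he]; exact Finset.mem_singleton_self e
  simp only [Finset.mem_filter, Finset.mem_inter] at heMem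
  refine ⟨e, ⟨by simpa [hSdef] using heMem.1.1, heMem.2, heMem.1.2⟩, ?_⟩
  rintro e' ⟨he'c, hue', he'M⟩
  have : e' ∈ (S ∩ M).filter (fun e => u ∈ e) := by
    simp only [Finset.mem_filter, Finset.mem_inter]
    exact ⟨⟨by simpa [hSdef] using he'c, he'M⟩, hue'⟩
  rw [he] at this
  exact Finset.mem_singleton.mp this
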